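/- Let A ∈ (ℝ ∪ {-∞})^{n×m}, b ∈ ℝ^n, and suppose x solves A ⊗ x = b. Then for each k ∈ {1, …, n} there exists a column index i such that k minimizes b_j − A_{ji} over all j with A_{ji} finite (i.e., k ∈ T(b, A_{·i})). Conversely, if the sets T(b, A_{·i}) for i = 1, …, m cover {1, …, n}, then x defined by x_i = min { b_j − A_{ji} : A_{ji} finite } (and x_i = -∞ if column i is entirely -∞) solves A ⊗ x = b. -/

import Mathlib

open Finset

/-- Max-plus matrix-vector product over `WithBot ℝ`. -/
def mpMul {n m : ℕ} (A : Fin n → Fin m → WithBot ℝ) (x : Fin m → WithBot ℝ) :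
    Fin n → WithBot ℝ :=
  fun i => univ.sup fun j => A i j + x j

/-- `k ∈ T(b, z)`: `z k` is finite and `k` minimizes `b_j - z_j` over indices
where `z` is finite. -/
def memT {n : ℕ} (b : Fin n → ℝ) (z : Fin n → WithBot ℝ) (k : Fin n) : Prop :=
  ∃ r : ℝ, z k = (r : WithBot ℝ) ∧
    ∀ l : Fin n, ∀ s : ℝ, z l = (s : WithBot ℝ) → b k - r ≤ b l - s

/-- The principal solution: `x_i = min { b_j - A_{ji} : A_{ji} finite }`, and
`x_i = -∞` if column `i` is identically `-∞`. -/
noncomputable def principalSol {n m : ℕ} (A : Fin n → Fin m → WithBot ℝ)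
    (b : Fin n → ℝ) : Fin m → WithBot ℝ :=
  fun i => if ∀ j, A j i = ⊥ then ⊥
    else (sInf {t : ℝ | ∃ j, ∃ r : ℝ, A j i = (r : WithBot ℝ) ∧ t = b j - r} : ℝ)

lemma colSet_bdd {n m : ℕ} (A : Fin n → Fin m → WithBot ℝ) (b : Fin n → ℝ)
    (i : Fin m) :
    BddBelow {t : ℝ | ∃ j, ∃ r : ℝ, A j i = (r : WithBot ℝ) ∧ t = b j - r} := by
  have hsub : {t : ℝ | ∃ j, ∃ r : ℝ, A j i = (r : WithBot ℝ) ∧ t = b j - r} ⊆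
      Set.range (fun j : Fin n => b j - WithBot.unbotD 0 (A j i)) := by
    rintro t ⟨j, r, hA, rfl⟩
    refine ⟨j, ?_⟩
    simp only [hA, WithBot.unbotD_coe]
  exact (Set.finite_range _).bddBelow.mono hsub

/-- If `x` solves `A ⊗ x = b` then the sets `T(b, A_{·i})` cover `{1,…,n}`;
conversely, if they cover, the principal solution solves `A ⊗ x = b`. -/
theorem onesided_cover_and_principal {n m : ℕ}
    (A : Fin n → Fin m → WithBot ℝ) (b : Fin n → ℝ) :
    (∀ x : Fin m → WithBot ℝ, (mpMul A x = fun k => (b k : WithBot ℝ)) →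
      ∀ k : Fin n, ∃ i : Fin m, memT b (fun l => A l i) k) ∧
    ((∀ k : Fin n, ∃ i : Fin m, memT b (fun l => A l i) k) →
      mpMul A (principalSol A b) = fun k => (b k : WithBot ℝ)) := by
  constructor
  · intro x hx k
    have hx' : ∀ l : Fin n, (univ.sup fun j => A l j + x j) = ((b l : ℝ) : WithBot ℝ) :=
      fun l => congrFun hx l
    have hle : ((b k : ℝ) : WithBot ℝ) ≤ univ.sup fun j => A k j + x j := (hx' k).ge
    rw [Finset.le_sup_iff (WithBot.bot_lt_coe (b k))] at hle
    obtain ⟨i, -, hi⟩ := hle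
    have hub : ∀ l : Fin n, ∀ j, A l j + x j ≤ ((b l : ℝ) : WithBot ℝ) := by
      intro l j
      rw [← hx' l]
      exact Finset.le_sup (f := fun j => A l j + x j) (mem_univ j)
    have heq : A k i + x i = ((b k : ℝ) : WithBot ℝ) := le_antisymm (hub k i) hi
    have hAne : A k i ≠ ⊥ := by
      intro h; rw [h, WithBot.bot_add] at heq; exact WithBot.bot_ne_coe heq
    have hxne : x i ≠ ⊥ := by
      intro h; rw [h, WithBot.add_bot] at heq; exact WithBot.bot_ne_coe heq
    obtain ⟨r, hr⟩ := WithBot.ne_bot_iff_exists.1 hAne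
    obtain ⟨s, hs⟩ := WithBot.ne_bot_iff_exists.1 hxne
    refine ⟨i, r, hr.symm, ?_⟩
    have hbk : r + s = b k := by
      rw [← hr, ← hs, ← WithBot.coe_add] at heq
      exact_mod_cast heq
    intro l s' hl
    have hl' : A l i = (s' : WithBot ℝ) := hl
    have hbl := hub l i
    rw [hl', ← hs, ← WithBot.coe_add, WithBot.coe_le_coe] at hbl
    linarith
  · intro hcov
    funext k
    unfold mpMul
    apply le_antisymm
    · apply Finset.sup_le
      intro i _
      unfold principalSol
      by_cases hbot : ∀ j, A j i = ⊥
      · rw [if_pos hbot, WithBot.add_bot]; exact bot_le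
      · rw [if_neg hbot]
        by_cases hA : A k i = ⊥
        · rw [hA, WithBot.bot_add]; exact bot_le
        · obtain ⟨r, hr⟩ := WithBot.ne_bot_iff_exists.1 hA
          rw [← hr, ← WithBot.coe_add, WithBot.coe_le_coe]
          have hmem : b k - r ∈ {t : ℝ | ∃ j, ∃ r : ℝ, A j i = (r : WithBot ℝ) ∧ t = b j - r} :=
            ⟨k, r, hr.symm, rfl⟩
          have := csInf_le (colSet_bdd A b i) hmem
          linarith
    · obtain ⟨i, r, hr, hmin⟩ := hcov k
      have hr' : A k i = (r : WithBot ℝ) := hr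
      have hbot : ¬ ∀ j, A j i = ⊥ := by
        intro h
        rw [h k] at hr'
        exact WithBot.bot_ne_coe hr'
      have hinf : sInf {t : ℝ | ∃ j, ∃ r : ℝ, A j i = (r : WithBot ℝ) ∧ t = b j - r}
          = b k - r := by
        apply le_antisymm
        · have hmem : b k - r ∈ {t : ℝ | ∃ j, ∃ r : ℝ, A j i = (r : WithBot ℝ) ∧ t = b j - r} :=
            ⟨k, r, hr', rfl⟩
          exact csInf_le (colSet_bdd A b i) hmem
        · have hne : Set.Nonempty {t : ℝ | ∃ j, ∃ r : ℝ, A j i = (r : WithBot ℝ) ∧ t = b j - r} :=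
            ⟨b k - r, k, r, hr', rfl⟩
          apply le_csInf hne
          rintro t ⟨j, s, hj, rfl⟩
          exact hmin j s hj
      have key : A k i + principalSol A b i = ((b k : ℝ) : WithBot ℝ) := by
        unfold principalSol
        rw [if_neg hbot, hinf, hr', ← WithBot.coe_add]
        norm_num
      calc ((b k : ℝ) : WithBot ℝ) = A k i + principalSol A b i := key.symm
        _ ≤ _ := Finset.le_sup (f := fun j => A k j + principalSol A b j) (mem_univ i)
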